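/- If a topological space X has a countable base consisting of clopen sets, then X is strongly zero-dimensional. Moreover, every zero-dimensional Lindelöf space is strongly zero-dimensional. -/
import Mathlib


open Set TopologicalSpace

/-- `X` is strongly zero-dimensional: `X` is completely regular (the co-zero sets form a
base) and every pair of disjoint zero-sets is separated by a clopen set. -/
def StronglyZeroDimensional (X : Type*) [TopologicalSpace X] : Prop :=
  IsTopologicalBasis {U : Set X | ∃ f : X → ℝ, Continuous f ∧ U = (f ⁻¹' {0})ᶜ} ∧
  ∀ f g : X → ℝ, Continuous f → Continuous g → Disjoint (f ⁻¹' {0}) (g ⁻¹' {0}) →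
    ∃ U : Set X, IsClopen U ∧ f ⁻¹' {0} ⊆ U ∧ U ⊆ (g ⁻¹' {0})ᶜ

/-- Every clopen set is a co-zero set. -/
lemma clopen_is_cozero {X : Type*} [TopologicalSpace X] {C : Set X} (hC : IsClopen C) :
    ∃ f : X → ℝ, Continuous f ∧ C = (f ⁻¹' {0})ᶜ := by
  classical
  refine ⟨fun x => if x ∈ C then 1 else 0, ?_, ?_⟩
  · apply continuous_if
    · intro a ha
      rw [show {x | x ∈ C} = C from rfl, hC.frontier_eq] at ha
      exact absurd ha (notMem_empty a)
    · exact continuous_const.continuousOn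
    · exact continuous_const.continuousOn
  · ext x; by_cases hx : x ∈ C <;> simp [hx]

/-- If the clopen sets form a basis, so do the co-zero sets. -/
lemma cozero_basis {X : Type*} [TopologicalSpace X]
    (hB : IsTopologicalBasis {U : Set X | IsClopen U}) :
    IsTopologicalBasis {U : Set X | ∃ f : X → ℝ, Continuous f ∧ U = (f ⁻¹' {0})ᶜ} := by
  apply isTopologicalBasis_of_isOpen_of_nhds
  · rintro u ⟨f, hf, rfl⟩
    exact (isClosed_singleton.preimage hf).isOpen_compl
  · intro a u ha hu
    obtain ⟨C, hC, haC, hCu⟩ := hB.exists_subset_of_mem_open ha hu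
    exact ⟨C, clopen_is_cozero hC, haC, hCu⟩

/-- In a zero-dimensional Lindelöf space, disjoint closed sets are separated by a clopen set. -/
lemma sep_of_zeroDim_lindelof {X : Type*} [TopologicalSpace X]
    (hB : IsTopologicalBasis {U : Set X | IsClopen U}) (hL : LindelofSpace X)
    {Z₁ Z₂ : Set X} (h1 : IsClosed Z₁) (h2 : IsClosed Z₂) (hd : Disjoint Z₁ Z₂) :
    ∃ U : Set X, IsClopen U ∧ Z₁ ⊆ U ∧ Disjoint U Z₂ := by
  classical
  -- cover the space by clopen sets, each disjoint from Z₁ or from Z₂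
  have hC : ∀ x : X, ∃ C : Set X, IsClopen C ∧ x ∈ C ∧ (Disjoint C Z₁ ∨ Disjoint C Z₂) := by
    intro x
    by_cases hx : x ∈ Z₁
    · have hx2 : x ∈ Z₂ᶜ := fun h => Set.disjoint_left.mp hd hx h
      obtain ⟨C, hC, hxC, hCs⟩ := hB.exists_subset_of_mem_open hx2 h2.isOpen_compl
      exact ⟨C, hC, hxC, Or.inr (Set.disjoint_left.mpr fun a ha => hCs ha)⟩
    · obtain ⟨C, hC, hxC, hCs⟩ := hB.exists_subset_of_mem_open hx h1.isOpen_compl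
      exact ⟨C, hC, hxC, Or.inl (Set.disjoint_left.mpr fun a ha => hCs ha)⟩
  choose C hCcl hCx hCd using hC
  obtain ⟨t, htc, htcov⟩ := isLindelof_univ.elim_countable_subcover C
    (fun x => (hCcl x).isOpen) (fun x _ => mem_iUnion.mpr ⟨x, hCx x⟩)
  rcases t.eq_empty_or_nonempty with rfl | htne
  · refine ⟨∅, isClopen_empty, fun x hx => ?_, by simp⟩
    simpa using htcov (mem_univ x)
  obtain ⟨d, rfl⟩ := htc.exists_eq_range htne
  set D : ℕ → Set X := fun n => C (d n) with hD
  have hmem : ∀ x : X, ∃ n, x ∈ D n := by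
    intro x
    have hx := htcov (mem_univ x)
    rw [mem_iUnion₂] at hx
    obtain ⟨y, ⟨n, rfl⟩, hxy⟩ := hx
    exact ⟨n, hxy⟩
  set E : ℕ → Set X := fun n => D n \ ⋃ k ∈ Finset.range n, D k with hE
  have hEcl : ∀ n, IsClopen (E n) :=
    fun n => ((hCcl _).inter (isClopen_biUnion_finset (fun k _ => hCcl _)).compl)
  have hEsub : ∀ n, E n ⊆ D n := fun n => diff_subset
  -- each point is in exactly one `E n`, namely for the least `n` with `x ∈ D n`
  have hxE : ∀ x : X, x ∈ E (Nat.find (hmem x)) := by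
    intro x
    refine ⟨Nat.find_spec (hmem x), fun hxk => ?_⟩
    rw [mem_iUnion₂] at hxk
    obtain ⟨k, hk, hxk⟩ := hxk
    exact Nat.find_min (hmem x) (Finset.mem_range.mp hk) hxk
  have hEuniq : ∀ x n, x ∈ E n → n = Nat.find (hmem x) := by
    intro x n hn
    have hle : Nat.find (hmem x) ≤ n := Nat.find_min' _ hn.1
    rcases hle.lt_or_eq with hlt | he
    · exact absurd (mem_iUnion₂.mpr ⟨_, Finset.mem_range.mpr hlt, Nat.find_spec (hmem x)⟩) hn.2
    · exact he.symm
  set S : Set ℕ := {n | Disjoint (D n) Z₂} with hS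
  set U : Set X := ⋃ n ∈ S, E n with hU
  have key : ∀ x : X, x ∈ U ↔ Nat.find (hmem x) ∈ S := by
    intro x
    constructor
    · intro hx
      rw [mem_iUnion₂] at hx
      obtain ⟨n, hnS, hnE⟩ := hx
      rwa [hEuniq x n hnE] at hnS
    · intro h
      exact mem_iUnion₂.mpr ⟨_, h, hxE x⟩
  have hUc : Uᶜ = ⋃ n ∈ Sᶜ, E n := by
    ext x
    simp only [mem_compl_iff, key, mem_iUnion₂]
    constructor
    · intro h
      exact ⟨_, h, hxE x⟩
    · rintro ⟨n, hn, hnE⟩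
      rwa [hEuniq x n hnE] at hn
  have hUopen : IsOpen U := isOpen_biUnion fun n _ => (hEcl n).isOpen
  have hUclosed : IsClosed U := by
    rw [← isOpen_compl_iff, hUc]
    exact isOpen_biUnion fun n _ => (hEcl n).isOpen
  refine ⟨U, ⟨hUclosed, hUopen⟩, ?_, ?_⟩
  · intro x hx
    rw [key x]
    rcases hCd (d (Nat.find (hmem x))) with h | h
    · exact absurd hx (Set.disjoint_left.mp h (Nat.find_spec (hmem x)))
    · exact h
  · rw [Set.disjoint_left]
    intro x hx hx2
    rw [mem_iUnion₂] at hx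
    obtain ⟨n, hnS, hnE⟩ := hx
    exact Set.disjoint_left.mp hnS (hEsub n hnE) hx2

lemma main (X : Type*) [TopologicalSpace X]
    (hB : IsTopologicalBasis {U : Set X | IsClopen U}) (hL : LindelofSpace X) :
    StronglyZeroDimensional X := by
  refine ⟨cozero_basis hB, ?_⟩
  intro f g hf hg hd
  obtain ⟨U, hU, hs1, hs2⟩ := sep_of_zeroDim_lindelof hB hL
    (isClosed_singleton.preimage hf) (isClosed_singleton.preimage hg) hd
  exact ⟨U, hU, hs1, hs2.subset_compl_right⟩

theorem stmt8 :
    (∀ (X : Type*) [TopologicalSpace X],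
      (∃ B : Set (Set X), B.Countable ∧ (∀ U ∈ B, IsClopen U) ∧ IsTopologicalBasis B) →
      StronglyZeroDimensional X) ∧
    (∀ (X : Type*) [TopologicalSpace X],
      IsTopologicalBasis {U : Set X | IsClopen U} → LindelofSpace X →
      StronglyZeroDimensional X) := by
  refine ⟨?_, fun X _ => main X⟩
  rintro X _ ⟨B, hBc, hBcl, hBbasis⟩
  haveI hsc : SecondCountableTopology X := hBbasis.secondCountableTopology hBc
  have hclB : IsTopologicalBasis {U : Set X | IsClopen U} := by
    apply isTopologicalBasis_of_isOpen_of_nhds (fun u hu => hu.isOpen)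
    intro a u ha hu
    obtain ⟨v, hv, hav, hvu⟩ := hBbasis.exists_subset_of_mem_open ha hu
    exact ⟨v, hBcl v hv, hav, hvu⟩
  exact main X hclB inferInstance
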